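/- Let A = C(X) for a compact Hausdorff space X and let p, q ∈ M_n(A) be projections of pointwise rank ≤ 1, endowing A^n p and A^n q with their symmetric Hilbert C*-bimodule structures (right inner product via the trace τ). Then A^n p and A^n q are isomorphic as Hilbert C*-bimodules if and only if p and q are Murray–von Neumann equivalent in M_n(A). -/

import Mathlib

noncomputable section

open Matrix

/-- The row space `A^n p = {m | m ⬝ p = m}`, as a `ℂ`-submodule of `Fin n → A`. -/
def rowMod {A : Type*} [NormedCommRing A] [NormedAlgebra ℂ A]
    {n : ℕ} (p : Matrix (Fin n) (Fin n) A) :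
    Submodule ℂ (Fin n → A) where
  carrier := {m | m ᵥ* p = m}
  add_mem' := by
    intro m r hm hr
    simp only [Set.mem_setOf_eq] at *
    rw [Matrix.add_vecMul, hm, hr]
  zero_mem' := by simp [Set.mem_setOf_eq]
  smul_mem' := by
    intro c m hm
    simp only [Set.mem_setOf_eq] at *
    rw [Matrix.smul_vecMul, hm]

section aux

variable {A : Type*} [CommRing A] [StarRing A] {n : ℕ}

private lemma rowmod_sumL (w : Matrix (Fin n) (Fin n) A) (m r : Fin n → A) :
    ∑ j, (m ᵥ* w) j * star ((r ᵥ* w) j) = ∑ k, (m ᵥ* (w * star w)) k * star (r k) := by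
  simp only [vecMul, dotProduct, Matrix.mul_apply, star_sum, star_mul', Finset.sum_mul,
    Finset.mul_sum, Matrix.conjTranspose_apply, Matrix.star_apply]
  rw [Finset.sum_comm]
  refine Finset.sum_congr rfl fun i _ => ?_
  rw [Finset.sum_comm]
  refine Finset.sum_congr rfl fun k _ => ?_
  refine Finset.sum_congr rfl fun j _ => ?_
  ring

private lemma rowmod_sumR (w : Matrix (Fin n) (Fin n) A) (m r : Fin n → A) :
    ∑ j, star ((m ᵥ* w) j) * (r ᵥ* w) j = ∑ i, star (m i) * (r ᵥ* (w * star w)) i := by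
  simp only [vecMul, dotProduct, Matrix.mul_apply, star_sum, star_mul', Finset.sum_mul,
    Finset.mul_sum, Matrix.conjTranspose_apply, Matrix.star_apply]
  rw [Finset.sum_comm]
  conv_rhs => rw [Finset.sum_comm]
  refine Finset.sum_congr rfl fun i _ => ?_
  rw [Finset.sum_comm]
  refine Finset.sum_congr rfl fun k _ => ?_
  refine Finset.sum_congr rfl fun j _ => ?_
  ring

end aux

section aux2

variable {A : Type*} [NormedCommRing A] [NormedAlgebra ℂ A] {n : ℕ}

/-- `rowMod p` is closed under pointwise multiplication by `a : A`. -/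
private lemma rowMod_mul_mem (p : Matrix (Fin n) (Fin n) A) (a : A) (m : Fin n → A)
    (hm : m ∈ rowMod p) : (fun i => a * m i) ∈ rowMod p := by
  have hm' : m ᵥ* p = m := hm
  show (fun i => a * m i) ᵥ* p = fun i => a * m i
  funext j
  have h2 : ∑ x, a * m x * p x j = a * ((m ᵥ* p) j) := by
    simp [vecMul, dotProduct, Finset.mul_sum, mul_assoc]
  show ∑ x, a * m x * p x j = a * m j
  rw [h2, hm']

/-- Rows of an idempotent `p` belong to `rowMod p`. -/
private lemma rowMod_row_mem (p : Matrix (Fin n) (Fin n) A) (hp : p * p = p) (k : Fin n) :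
    p k ∈ rowMod p := by
  show p k ᵥ* p = p k
  funext j
  simp only [vecMul, dotProduct, ← Matrix.mul_apply, hp]

end aux2

/-- Example 1.8 (`proj`), conclusion: for `A = C(X)` (`X` compact Hausdorff)
and projections `p, q ∈ M_n(A)` of pointwise rank `≤ 1`, the symmetric Hilbert
C*-bimodules `A^n p` and `A^n q` (pointwise actions on both sides,
`⟨m,r⟩_L = Σ mᵢ (rᵢ)*`, `⟨m,r⟩_R = τ(m* r)`) are isomorphic as Hilbert
C*-bimodules if and only if `p` and `q` are Murray–von Neumann equivalent. -/
theorem rowMod_iso_iff_murrayVonNeumann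
    {X : Type*} [TopologicalSpace X] [CompactSpace X] [T2Space X]
    {n : ℕ} (p q : Matrix (Fin n) (Fin n) C(X, ℂ))
    (hp : p * p = p) (hpsa : star p = p) (hq : q * q = q) (hqsa : star q = q)
    (hrankp : ∀ x : X, (p.map (fun f => f x)).rank ≤ 1)
    (hrankq : ∀ x : X, (q.map (fun f => f x)).rank ≤ 1) :
    (∃ Φ : rowMod p → rowMod q,
      Function.Bijective Φ ∧
      (∀ m r : rowMod p, Φ (m + r) = Φ m + Φ r) ∧
      (∀ (c : ℂ) (m : rowMod p), Φ (c • m) = c • Φ m) ∧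
      (∀ (a : C(X, ℂ)) (m m' : rowMod p),
        ((m' : Fin n → C(X, ℂ)) = fun i => a * (m : Fin n → C(X, ℂ)) i) →
        ((Φ m' : Fin n → C(X, ℂ)) = fun i => a * (Φ m : Fin n → C(X, ℂ)) i)) ∧
      (∀ m r : rowMod p,
        (∑ i, (Φ m : Fin n → C(X, ℂ)) i * star ((Φ r : Fin n → C(X, ℂ)) i)) =
          ∑ i, (m : Fin n → C(X, ℂ)) i * star ((r : Fin n → C(X, ℂ)) i)) ∧
      (∀ m r : rowMod p,
        (∑ i, star ((Φ m : Fin n → C(X, ℂ)) i) * (Φ r : Fin n → C(X, ℂ)) i) =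
          ∑ i, star ((m : Fin n → C(X, ℂ)) i) * (r : Fin n → C(X, ℂ)) i)) ↔
    ∃ v : Matrix (Fin n) (Fin n) C(X, ℂ), star v * v = p ∧ v * star v = q := by
  constructor
  · -- forward direction
    rintro ⟨Φ, hbij, hadd, hsmul, hA, hL, hR⟩
    -- Φ 0 = 0
    have h0 : Φ 0 = 0 := by
      have := hsmul 0 0
      set_option synthInstance.maxHeartbeats 400000 in simpa using this
    -- Φ of finite sums
    have hsum : ∀ (f : Fin n → rowMod p), Φ (∑ k, f k) = ∑ k, Φ (f k) := by
      intro f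
      classical
      induction (Finset.univ : Finset (Fin n)) using Finset.induction with
      | empty => simpa using h0
      | insert _ _ hx ih =>
          rw [Finset.sum_insert hx, Finset.sum_insert hx, hadd, ih]
    -- rows of p as elements of rowMod p
    set pr : Fin n → rowMod p := fun k => ⟨p k, rowMod_row_mem p hp k⟩ with hpr
    set w : Fin n → (Fin n → C(X, ℂ)) := fun k => (Φ (pr k) : Fin n → C(X, ℂ)) with hw
    have hwq : ∀ k, w k ᵥ* q = w k := fun k => (Φ (pr k)).property
    -- expansion lemma
    have hexp : ∀ m : rowMod p, ∀ j,
        (Φ m : Fin n → C(X, ℂ)) j = ∑ k, (m : Fin n → C(X, ℂ)) k * w k j := by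
      intro m j
      set f : Fin n → rowMod p := fun k =>
        ⟨fun i => (m : Fin n → C(X, ℂ)) k * p k i,
          rowMod_mul_mem p _ _ (rowMod_row_mem p hp k)⟩ with hf
      have hmf : m = ∑ k, f k := by
        apply Subtype.ext
        have hcoe : ((∑ k, f k : rowMod p) : Fin n → C(X, ℂ))
            = ∑ k, ((f k : rowMod p) : Fin n → C(X, ℂ)) := by
          simp
        rw [hcoe]
        funext i
        have hm' : (m : Fin n → C(X, ℂ)) ᵥ* p = (m : Fin n → C(X, ℂ)) := m.property
        calc (m : Fin n → C(X, ℂ)) i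
            = ((m : Fin n → C(X, ℂ)) ᵥ* p) i := by rw [hm']
          _ = ∑ k, (m : Fin n → C(X, ℂ)) k * p k i := rfl
          _ = (∑ k, ((f k : rowMod p) : Fin n → C(X, ℂ))) i := by
              simp [hf]
      have hPhif : ∀ k, (Φ (f k) : Fin n → C(X, ℂ)) =
          fun i => (m : Fin n → C(X, ℂ)) k * w k i := by
        intro k
        exact hA ((m : Fin n → C(X, ℂ)) k) (pr k) (f k) rfl
      calc (Φ m : Fin n → C(X, ℂ)) j = (Φ (∑ k, f k) : Fin n → C(X, ℂ)) j := by rw [← hmf]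
        _ = ((∑ k, Φ (f k) : rowMod q) : Fin n → C(X, ℂ)) j := by rw [hsum]
        _ = ∑ k, (Φ (f k) : Fin n → C(X, ℂ)) j := by simp
        _ = ∑ k, (m : Fin n → C(X, ℂ)) k * w k j := by
            refine Finset.sum_congr rfl fun k _ => ?_
            rw [hPhif k]
    -- surjectivity: preimages of rows of q
    have hqrow : ∀ j, (q j : Fin n → C(X, ℂ)) ∈ rowMod q := fun j => rowMod_row_mem q hq j
    choose u hu using fun j => hbij.2 ⟨q j, hqrow j⟩
    -- key a : star (w k i) = (u i) k
    have hkeya : ∀ k i, star (w k i) = (u i : Fin n → C(X, ℂ)) k := by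
      intro k i
      have h1 := hR (pr k) (u i)
      rw [hu i] at h1
      have hLHS : ∑ l, star (w k l) * q i l = star (w k i) := by
        have : ∀ l, star (w k l) * q i l = star (w k l * q l i) := by
          intro l
          rw [star_mul']
          congr 1
          conv_lhs => rw [← hqsa]
          rfl
        calc ∑ l, star (w k l) * q i l = ∑ l, star (w k l * q l i) :=
              Finset.sum_congr rfl fun l _ => this l
          _ = star (∑ l, w k l * q l i) := (star_sum _ _).symm
          _ = star ((w k ᵥ* q) i) := rfl
          _ = star (w k i) := by rw [hwq k]
      have hRHS : ∑ l, star (p k l) * (u i : Fin n → C(X, ℂ)) l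
          = (u i : Fin n → C(X, ℂ)) k := by
        have hup : (u i : Fin n → C(X, ℂ)) ᵥ* p = (u i : Fin n → C(X, ℂ)) := (u i).property
        calc ∑ l, star (p k l) * (u i : Fin n → C(X, ℂ)) l
            = ∑ l, (u i : Fin n → C(X, ℂ)) l * p l k := by
              refine Finset.sum_congr rfl fun l _ => ?_
              rw [mul_comm]
              congr 1
              conv_rhs => rw [← hpsa]
              rfl
          _ = ((u i : Fin n → C(X, ℂ)) ᵥ* p) k := rfl
          _ = (u i : Fin n → C(X, ℂ)) k := by rw [hup]
      -- h1 : ∑ l, star ((Φ (pr k)) l) * (q i) l = ∑ l, star ((pr k) l) * (u i) l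
      rw [← hLHS]
      calc ∑ l, star (w k l) * q i l
          = ∑ l, star (p k l) * (u i : Fin n → C(X, ℂ)) l := h1
        _ = (u i : Fin n → C(X, ℂ)) k := hRHS
    -- the matrix
    set W : Matrix (Fin n) (Fin n) C(X, ℂ) := Matrix.of (fun k i => w k i) with hW
    refine ⟨star W, ?_, ?_⟩
    · -- star (star W) * star W = p, i.e. W * star W = p
      rw [star_star]
      refine Matrix.ext fun k l => ?_
      have hLkl := hL (pr k) (pr l)
      calc (W * star W) k l = ∑ i, w k i * star (w l i) := by
            simp [hW, Matrix.mul_apply, Matrix.conjTranspose_apply]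
        _ = ∑ i, p k i * star (p l i) := hLkl
        _ = ∑ i, p k i * p i l := by
            refine Finset.sum_congr rfl fun i _ => ?_
            congr 1
            conv_rhs => rw [← hpsa]
            rfl
        _ = (p * p) k l := (Matrix.mul_apply).symm
        _ = p k l := by rw [hp]
    · -- star W * W = q
      have hWW : star (star W) = W := star_star W
      rw [hWW]
      refine Matrix.ext fun i j => ?_
      calc (star W * W) i j
          = ∑ k, star (w k i) * w k j := by
            simp [hW, Matrix.mul_apply, Matrix.conjTranspose_apply, Matrix.of_apply]
      _ = ∑ k, (u i : Fin n → C(X, ℂ)) k * w k j := by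
            refine Finset.sum_congr rfl fun k _ => ?_
            rw [hkeya k i]
      _ = (Φ (u i) : Fin n → C(X, ℂ)) j := (hexp (u i) j).symm
      _ = q i j := by rw [hu i]
  · -- backward direction
    rintro ⟨v, h1, h2⟩
    have hmem : ∀ m : Fin n → C(X, ℂ), m ᵥ* p = m → (m ᵥ* star v) ᵥ* q = m ᵥ* star v := by
      intro m hm
      rw [vecMul_vecMul, ← h2, ← Matrix.mul_assoc, h1, ← vecMul_vecMul, hm]
    have hmem' : ∀ r : Fin n → C(X, ℂ), r ᵥ* q = r → (r ᵥ* v) ᵥ* p = r ᵥ* v := by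
      intro r hr
      rw [vecMul_vecMul, ← h1, ← Matrix.mul_assoc, h2, ← vecMul_vecMul, hr]
    set Φ : rowMod p → rowMod q := fun m =>
      ⟨(m : Fin n → C(X, ℂ)) ᵥ* star v, hmem _ m.property⟩ with hΦ
    set Ψ : rowMod q → rowMod p := fun r =>
      ⟨(r : Fin n → C(X, ℂ)) ᵥ* v, hmem' _ r.property⟩ with hΨ
    have hΨΦ : ∀ m, Ψ (Φ m) = m := by
      intro m
      apply Subtype.ext
      show ((m : Fin n → C(X, ℂ)) ᵥ* star v) ᵥ* v = (m : Fin n → C(X, ℂ))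
      rw [vecMul_vecMul, h1, m.property]
    have hΦΨ : ∀ r, Φ (Ψ r) = r := by
      intro r
      apply Subtype.ext
      show ((r : Fin n → C(X, ℂ)) ᵥ* v) ᵥ* star v = (r : Fin n → C(X, ℂ))
      rw [vecMul_vecMul, h2, r.property]
    have hvw : star v * star (star v) = p := by rw [star_star]; exact h1
    refine ⟨Φ, ⟨Function.LeftInverse.injective hΨΦ, Function.RightInverse.surjective hΦΨ⟩,
      ?_, ?_, ?_, ?_, ?_⟩
    · intro m r
      apply Subtype.ext
      show ((m + r : rowMod p) : Fin n → C(X, ℂ)) ᵥ* star v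
        = (m : Fin n → C(X, ℂ)) ᵥ* star v + (r : Fin n → C(X, ℂ)) ᵥ* star v
      rw [Submodule.coe_add, Matrix.add_vecMul]
    · intro c m
      apply Subtype.ext
      show ((c • m : rowMod p) : Fin n → C(X, ℂ)) ᵥ* star v
        = c • ((m : Fin n → C(X, ℂ)) ᵥ* star v)
      rw [Submodule.coe_smul, Matrix.smul_vecMul]
    · intro a m m' hmm'
      show ((m' : Fin n → C(X, ℂ)) ᵥ* star v) = fun i => a * ((m : Fin n → C(X, ℂ)) ᵥ* star v) i
      rw [hmm']
      funext j
      show ∑ x, (a * (m : Fin n → C(X, ℂ)) x) * (star v) x j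
        = a * ∑ x, (m : Fin n → C(X, ℂ)) x * (star v) x j
      rw [Finset.mul_sum]
      refine Finset.sum_congr rfl fun x _ => ?_
      ring
    · intro m r
      show ∑ j, ((m : Fin n → C(X, ℂ)) ᵥ* star v) j * star (((r : Fin n → C(X, ℂ)) ᵥ* star v) j)
        = ∑ i, (m : Fin n → C(X, ℂ)) i * star ((r : Fin n → C(X, ℂ)) i)
      rw [rowmod_sumL (star v), hvw, m.property]
    · intro m r
      show ∑ j, star (((m : Fin n → C(X, ℂ)) ᵥ* star v) j) * ((r : Fin n → C(X, ℂ)) ᵥ* star v) j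
        = ∑ i, star ((m : Fin n → C(X, ℂ)) i) * (r : Fin n → C(X, ℂ)) i
      rw [rowmod_sumR (star v), hvw, r.property]
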